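/- If m + n ≥ 10, or (m,n) ∈ {(6,1), (5,2), (7,1), (6,2), (5,3), (4,4), (8,1), (2,7), (3,6), (4,5), (5,4), (6,3), (7,2), (4,1), (4,3), (5,1), (1,8)}, then the spider Sp(1^[m], 2^[n]) has local antimagic total chromatic number 3. -/

import Mathlib

open Finset

variable {V : Type*} [Fintype V] [DecidableEq V]

/-- The weight of a vertex `u` under the total labeling given by vertex labels `fv`
and edge labels `fe` : `w(u) = f(u) + \sum_{e incident to u} f(e)`. -/
def latWeight (G : SimpleGraph V) [DecidableRel G.Adj]
    (fv : V → ℕ) (fe : Sym2 V → ℕ) (u : V) : ℕ :=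
  fv u + ∑ v ∈ G.neighborFinset u, fe s(u, v)

/-- `fv, fe` together form a bijection from `V(G) ∪ E(G)` onto `{1, …, p + q}`,
where `p` is the order and `q` is the size of `G`. -/
def IsTotalLabeling (G : SimpleGraph V) [DecidableRel G.Adj]
    (fv : V → ℕ) (fe : Sym2 V → ℕ) : Prop :=
  Set.BijOn (Sum.elim fv (fun e : G.edgeSet => fe (e : Sym2 V))) Set.univ
    (Set.Icc 1 (Fintype.card V + G.edgeFinset.card))

/-- A local antimagic total labeling of `G` : a bijective total labeling such that any two
adjacent vertices get distinct weights. -/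
def IsLocalAntimagicTotal (G : SimpleGraph V) [DecidableRel G.Adj]
    (fv : V → ℕ) (fe : Sym2 V → ℕ) : Prop :=
  IsTotalLabeling G fv fe ∧
    ∀ ⦃u v : V⦄, G.Adj u v → latWeight G fv fe u ≠ latWeight G fv fe v

/-- The local antimagic total chromatic number `χ_lat(G)` : the minimum number of distinct
vertex weights taken over all local antimagic total labelings of `G`. -/
noncomputable def chiLat (G : SimpleGraph V) [DecidableRel G.Adj] : ℕ :=
  sInf {c | ∃ fv fe, IsLocalAntimagicTotal G fv fe ∧
    (Finset.univ.image (latWeight G fv fe)).card = c}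

instance {W : Type*} (r : W → W → Prop) [DecidableEq W] [DecidableRel r] :
    DecidableRel (SimpleGraph.fromRel r).Adj :=
  fun a b => decidable_of_iff _ (SimpleGraph.fromRel_adj r a b).symm

/-- Adjacency for the spider `Sp(1^[m], 2^[n])` : the center `x = none` is adjacent to each
leaf `y i = some (Sum.inl i)` and to each `u j = some (Sum.inr (j, false))`, and each `u j`
is adjacent to the leaf `v j = some (Sum.inr (j, true))`. -/
def spider12R (m n : ℕ) :
    Option (Fin m ⊕ Fin n × Bool) → Option (Fin m ⊕ Fin n × Bool) → Bool
  | none, some (Sum.inl _) => true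
  | none, some (Sum.inr (_, false)) => true
  | some (Sum.inr (j, false)), some (Sum.inr (j', true)) => decide (j = j')
  | _, _ => false

/-- The spider `Sp(1^[m], 2^[n])` with `m` legs of length `1` and `n` legs of length `2`. -/
abbrev spider12 (m n : ℕ) : SimpleGraph (Option (Fin m ⊕ Fin n × Bool)) :=
  SimpleGraph.fromRel (fun a b => spider12R m n a b = true)


namespace SpiderAux
variable {m n : ℕ}

abbrev Wt (m n : ℕ) := Option (Fin m ⊕ Fin n × Bool)
def vY (i : Fin m) : Wt m n := some (Sum.inl i)
def vU (j : Fin n) : Wt m n := some (Sum.inr (j, false))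
def vV (j : Fin n) : Wt m n := some (Sum.inr (j, true))

lemma adj_iff (a b : Wt m n) : (spider12 m n).Adj a b ↔
    (∃ i, a = none ∧ b = vY i) ∨ (∃ j, a = none ∧ b = vU j) ∨
    (∃ j, a = vU j ∧ b = vV j) ∨
    (∃ i, b = none ∧ a = vY i) ∨ (∃ j, b = none ∧ a = vU j) ∨
    (∃ j, b = vU j ∧ a = vV j) := by
  rw [SimpleGraph.fromRel_adj]
  constructor
  · rintro ⟨hne, h | h⟩ <;>
    · rcases a with _ | (i | ⟨j, _ | _⟩) <;> rcases b with _ | (i' | ⟨j', _ | _⟩) <;>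
        simp_all [spider12R, vY, vU, vV]
  · rintro (⟨i, rfl, rfl⟩ | ⟨j, rfl, rfl⟩ | ⟨j, rfl, rfl⟩ | ⟨i, rfl, rfl⟩ | ⟨j, rfl, rfl⟩ |
      ⟨j, rfl, rfl⟩) <;> simp [spider12R, vY, vU, vV]

end SpiderAux

namespace SpiderAux
variable {m n : ℕ}

lemma vY_ne_vU (i : Fin m) (j : Fin n) : (vY i : Wt m n) ≠ vU j := by simp [vY, vU]
lemma vY_ne_vV (i : Fin m) (j : Fin n) : (vY i : Wt m n) ≠ vV j := by simp [vY, vV]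
lemma vU_ne_vV (j j' : Fin n) : (vU j : Wt m n) ≠ vV j' := by simp [vU, vV]

lemma adj_none_vY (i : Fin m) : (spider12 m n).Adj none (vY i) := by
  rw [adj_iff]; exact Or.inl ⟨i, rfl, rfl⟩
lemma adj_none_vU (j : Fin n) : (spider12 m n).Adj none (vU j) := by
  rw [adj_iff]; exact Or.inr (Or.inl ⟨j, rfl, rfl⟩)
lemma adj_vU_vV (j : Fin n) : (spider12 m n).Adj (vU j) (vV j) := by
  rw [adj_iff]; exact Or.inr (Or.inr (Or.inl ⟨j, rfl, rfl⟩))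

lemma nbhd_none : (spider12 m n).neighborFinset none =
    (univ.image fun i => (vY i : Wt m n)) ∪ (univ.image fun j => (vU j : Wt m n)) := by
  ext z
  simp only [SimpleGraph.mem_neighborFinset, mem_union, mem_image, mem_univ, true_and]
  constructor
  · intro h
    rw [adj_iff] at h
    rcases h with ⟨i, -, rfl⟩ | ⟨j, -, rfl⟩ | ⟨j, h, -⟩ | ⟨i, -, h⟩ | ⟨j, -, h⟩ | ⟨j, -, h⟩
    · exact Or.inl ⟨i, rfl⟩
    · exact Or.inr ⟨j, rfl⟩
    · exact absurd h (by simp [vU])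
    · exact absurd h (by simp [vY])
    · exact absurd h (by simp [vU])
    · exact absurd h (by simp [vV])
  · rintro (⟨i, rfl⟩ | ⟨j, rfl⟩)
    · exact adj_none_vY i
    · exact adj_none_vU j

lemma nbhd_vY (i : Fin m) : (spider12 m n).neighborFinset (vY i) = {(none : Wt m n)} := by
  ext z
  simp only [SimpleGraph.mem_neighborFinset, mem_singleton]
  constructor
  · intro h
    rw [adj_iff] at h
    rcases h with ⟨i', h, -⟩ | ⟨j, h, -⟩ | ⟨j, h, -⟩ | ⟨i', rfl, -⟩ | ⟨j, -, h⟩ | ⟨j, -, h⟩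
    · exact absurd h (by simp [vY])
    · exact absurd h (by simp [vY])
    · exact absurd h (by simp [vY, vU])
    · rfl
    · exact absurd h (by simp [vY, vU])
    · exact absurd h (by simp [vY, vV])
  · rintro rfl
    exact ((spider12 m n).adj_symm (adj_none_vY i))

lemma nbhd_vU (j : Fin n) : (spider12 m n).neighborFinset (vU j) =
    {(none : Wt m n), vV j} := by
  ext z
  simp only [SimpleGraph.mem_neighborFinset, mem_insert, mem_singleton]
  constructor
  · intro h
    rw [adj_iff] at h
    rcases h with ⟨i', h, -⟩ | ⟨j', h, -⟩ | ⟨j', h, rfl⟩ | ⟨i', -, h⟩ | ⟨j', rfl, -⟩ | ⟨j', -, h⟩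
    · exact absurd h (by simp [vU])
    · exact absurd h (by simp [vU])
    · right
      have : j = j' := by simpa [vU] using h
      rw [this]
    · exact absurd h (by simp [vU, vY])
    · exact Or.inl rfl
    · exact absurd h (by simp [vU, vV])
  · rintro (rfl | rfl)
    · exact ((spider12 m n).adj_symm (adj_none_vU j))
    · exact adj_vU_vV j

lemma nbhd_vV (j : Fin n) : (spider12 m n).neighborFinset (vV j) = {vU j} := by
  ext z
  simp only [SimpleGraph.mem_neighborFinset, mem_singleton]
  constructor
  · intro h
    rw [adj_iff] at h
    rcases h with ⟨i', h, -⟩ | ⟨j', h, -⟩ | ⟨j', h, -⟩ | ⟨i', -, h⟩ | ⟨j', -, h⟩ | ⟨j', rfl, h⟩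
    · exact absurd h (by simp [vV])
    · exact absurd h (by simp [vV])
    · exact absurd h (by simp [vV, vU])
    · exact absurd h (by simp [vV, vY])
    · exact absurd h (by simp [vV, vU])
    · have hj : j = j' := by simpa [vV] using h
      rw [hj]
  · rintro rfl
    exact ((spider12 m n).adj_symm (adj_vU_vV j))

lemma edge_cases {e : Sym2 (Wt m n)} (he : e ∈ (spider12 m n).edgeSet) :
    (∃ i, e = s(none, vY i)) ∨ (∃ j, e = s(none, vU j)) ∨ (∃ j, e = s(vU j, vV j)) := by
  induction e using Sym2.ind with
  | _ c d =>
    rw [SimpleGraph.mem_edgeSet, adj_iff] at he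
    rcases he with ⟨i, rfl, rfl⟩ | ⟨j, rfl, rfl⟩ | ⟨j, rfl, rfl⟩ | ⟨i, rfl, rfl⟩ |
      ⟨j, rfl, rfl⟩ | ⟨j, rfl, rfl⟩
    · exact Or.inl ⟨i, rfl⟩
    · exact Or.inr (Or.inl ⟨j, rfl⟩)
    · exact Or.inr (Or.inr ⟨j, rfl⟩)
    · exact Or.inl ⟨i, Sym2.eq_swap⟩
    · exact Or.inr (Or.inl ⟨j, Sym2.eq_swap⟩)
    · exact Or.inr (Or.inr ⟨j, Sym2.eq_swap⟩)

end SpiderAux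

namespace SpiderAux
variable {m n : ℕ}

def eY (i : Fin m) : (spider12 m n).edgeSet :=
  ⟨s(none, vY i), (spider12 m n).mem_edgeSet.mpr (adj_none_vY i)⟩
def eU (j : Fin n) : (spider12 m n).edgeSet :=
  ⟨s(none, vU j), (spider12 m n).mem_edgeSet.mpr (adj_none_vU j)⟩
def eD (j : Fin n) : (spider12 m n).edgeSet :=
  ⟨s(vU j, vV j), (spider12 m n).mem_edgeSet.mpr (adj_vU_vV j)⟩

lemma eY_inj : Function.Injective (eY : Fin m → (spider12 m n).edgeSet) := by
  intro i i' h
  simpa [eY, Subtype.ext_iff, Sym2.eq_iff, vY] using h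
lemma eU_inj : Function.Injective (eU : Fin n → (spider12 m n).edgeSet) := by
  intro j j' h
  simpa [eU, Subtype.ext_iff, Sym2.eq_iff, vU] using h
lemma eD_inj : Function.Injective (eD : Fin n → (spider12 m n).edgeSet) := by
  intro j j' h
  simpa [eD, Subtype.ext_iff, Sym2.eq_iff, vU, vV] using h

lemma eY_ne_eU (i : Fin m) (j : Fin n) : (eY i : (spider12 m n).edgeSet) ≠ eU j := by
  simp [eY, eU, Subtype.ext_iff, Sym2.eq_iff, vY, vU]
lemma eY_ne_eD (i : Fin m) (j : Fin n) : (eY i : (spider12 m n).edgeSet) ≠ eD j := by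
  simp [eY, eD, Subtype.ext_iff, Sym2.eq_iff, vY, vU, vV]
lemma eU_ne_eD (j j' : Fin n) : (eU j : (spider12 m n).edgeSet) ≠ eD j' := by
  simp [eU, eD, Subtype.ext_iff, Sym2.eq_iff, vU, vV]

lemma edge_univ : (univ : Finset (spider12 m n).edgeSet) =
    (univ.image eY ∪ univ.image eU) ∪ univ.image eD := by
  ext e
  simp only [mem_univ, true_iff, mem_union, mem_image, true_and]
  obtain ⟨e, he⟩ := e
  rcases edge_cases he with ⟨i, rfl⟩ | ⟨j, rfl⟩ | ⟨j, rfl⟩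
  · exact Or.inl (Or.inl ⟨i, rfl⟩)
  · exact Or.inl (Or.inr ⟨j, rfl⟩)
  · exact Or.inr ⟨j, rfl⟩

lemma disj_YU : Disjoint (univ.image (eY : Fin m → (spider12 m n).edgeSet)) (univ.image eU) := by
  simp only [disjoint_left, mem_image, mem_univ, true_and]
  rintro e ⟨i, rfl⟩ ⟨j, h⟩
  exact eY_ne_eU i j h.symm
lemma disj_YUD : Disjoint ((univ.image (eY : Fin m → (spider12 m n).edgeSet)) ∪ univ.image eU)
    (univ.image eD) := by
  simp only [disjoint_left, mem_union, mem_image, mem_univ, true_and]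
  rintro e (⟨i, rfl⟩ | ⟨j, rfl⟩) ⟨j', h⟩
  · exact eY_ne_eD i j' h.symm
  · exact eU_ne_eD j j' h.symm

lemma card_edgeSet : Fintype.card (spider12 m n).edgeSet = m + n + n := by
  rw [← Finset.card_univ, edge_univ, Finset.card_union_of_disjoint disj_YUD,
    Finset.card_union_of_disjoint disj_YU, Finset.card_image_of_injective _ eY_inj,
    Finset.card_image_of_injective _ eU_inj, Finset.card_image_of_injective _ eD_inj]
  simp

lemma card_W : Fintype.card (Wt m n) = m + 2 * n + 1 := by
  simp [Fintype.card_option, Fintype.card_sum, Fintype.card_prod]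
  ring

lemma card_edgeFinset : (spider12 m n).edgeFinset.card = m + n + n := by
  rw [SimpleGraph.edgeFinset, Set.toFinset_card, card_edgeSet]

lemma sum_edges (F : (spider12 m n).edgeSet → ℕ) :
    ∑ e : (spider12 m n).edgeSet, F e =
      (∑ i : Fin m, F (eY i)) + (∑ j : Fin n, F (eU j)) + (∑ j : Fin n, F (eD j)) := by
  rw [edge_univ, Finset.sum_union disj_YUD, Finset.sum_union disj_YU,
    Finset.sum_image (fun a _ b _ h => eY_inj h), Finset.sum_image (fun a _ b _ h => eU_inj h),
    Finset.sum_image (fun a _ b _ h => eD_inj h)]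

-- weight formulas
variable (fv : Wt m n → ℕ) (fe : Sym2 (Wt m n) → ℕ)

lemma w_none : latWeight (spider12 m n) fv fe none =
    fv none + ((∑ i : Fin m, fe s(none, vY i)) + ∑ j : Fin n, fe s(none, vU j)) := by
  rw [latWeight, nbhd_none, Finset.sum_union, Finset.sum_image, Finset.sum_image]
  · intro a _ b _ h; simpa [vU] using h
  · intro a _ b _ h; simpa [vY] using h
  · simp only [disjoint_left, mem_image, mem_univ, true_and]
    rintro z ⟨i, rfl⟩ ⟨j, h⟩
    exact vY_ne_vU i j h.symm

lemma w_vY (i : Fin m) : latWeight (spider12 m n) fv fe (vY i) =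
    fv (vY i) + fe s(none, vY i) := by
  rw [latWeight, nbhd_vY, Finset.sum_singleton, Sym2.eq_swap]

lemma w_vU (j : Fin n) : latWeight (spider12 m n) fv fe (vU j) =
    fv (vU j) + (fe s(none, vU j) + fe s(vU j, vV j)) := by
  rw [latWeight, nbhd_vU, Finset.sum_pair (by simp [vV]), Sym2.eq_swap]

lemma w_vV (j : Fin n) : latWeight (spider12 m n) fv fe (vV j) =
    fv (vV j) + fe s(vU j, vV j) := by
  rw [latWeight, nbhd_vV, Finset.sum_singleton, Sym2.eq_swap]

end SpiderAux

theorem myBijOn {I : Type*} [Fintype I] (g : I → ℕ) (N : ℕ)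
    (hinj : Function.Injective g) (hm : ∀ i, g i ∈ Set.Icc 1 N)
    (hcard : Fintype.card I = N) : Set.BijOn g Set.univ (Set.Icc 1 N) := by
  have himg : g '' Set.univ = Set.Icc 1 N := by
    apply Set.eq_of_subset_of_ncard_le
    · rintro y ⟨i, -, rfl⟩; exact hm i
    · rw [Set.ncard_image_of_injective _ hinj, ← Finset.coe_Icc, Set.ncard_coe_finset]
      simp [Set.ncard_univ, hcard]
    · rw [← Finset.coe_Icc]; exact (Finset.Icc 1 N).finite_toSet
  exact ⟨fun i _ => hm i, hinj.injOn, himg.symm.subset⟩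

namespace SpiderAux
variable {m n : ℕ}

lemma item_cases (it : Wt m n ⊕ (spider12 m n).edgeSet) :
    it = Sum.inl none ∨
    (∃ k, ∃ hk : k < m, it = Sum.inl (vY ⟨k, hk⟩)) ∨
    (∃ k, ∃ hk : k < n, it = Sum.inl (vU ⟨k, hk⟩)) ∨
    (∃ k, ∃ hk : k < n, it = Sum.inl (vV ⟨k, hk⟩)) ∨
    (∃ k, ∃ hk : k < m, it = Sum.inr (eY ⟨k, hk⟩)) ∨
    (∃ k, ∃ hk : k < n, it = Sum.inr (eU ⟨k, hk⟩)) ∨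
    (∃ k, ∃ hk : k < n, it = Sum.inr (eD ⟨k, hk⟩)) := by
  rcases it with (_ | (⟨i, hi⟩ | ⟨⟨j, hj⟩, _ | _⟩)) | ⟨e, he⟩
  · exact Or.inl rfl
  · exact Or.inr (Or.inl ⟨i, hi, rfl⟩)
  · exact Or.inr (Or.inr (Or.inl ⟨j, hj, rfl⟩))
  · exact Or.inr (Or.inr (Or.inr (Or.inl ⟨j, hj, rfl⟩)))
  · rcases edge_cases he with ⟨⟨i, hi⟩, rfl⟩ | ⟨⟨j, hj⟩, rfl⟩ | ⟨⟨j, hj⟩, rfl⟩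
    · exact Or.inr (Or.inr (Or.inr (Or.inr (Or.inl ⟨i, hi, rfl⟩))))
    · exact Or.inr (Or.inr (Or.inr (Or.inr (Or.inr (Or.inl ⟨j, hj, rfl⟩)))))
    · exact Or.inr (Or.inr (Or.inr (Or.inr (Or.inr (Or.inr ⟨j, hj, rfl⟩)))))

end SpiderAux

namespace SpiderUB
open SpiderAux
variable (m n : ℕ)

def fv0 : Wt m n → ℕ
  | none => 2*m+4*n+1
  | some (Sum.inl i) => i.val + 1
  | some (Sum.inr (j, false)) => 2*m+2*n+1+j.val
  | some (Sum.inr (j, true)) => m+2*j.val+1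

def eh : Wt m n → Wt m n → ℕ
  | none, some (Sum.inl i) => 2*m+2*n - i.val
  | none, some (Sum.inr (j, false)) => 2*m+3*n+1+j.val
  | some (Sum.inr (j, false)), some (Sum.inr (j', true)) =>
      if j = j' then m+2*n-2*j.val else 0
  | _, _ => 0

def fe0 : Sym2 (Wt m n) → ℕ :=
  Sym2.lift ⟨fun a b => eh m n a b + eh m n b a, fun a b => by dsimp; omega⟩

lemma fe0_mk (a b : Wt m n) : fe0 m n s(a, b) = eh m n a b + eh m n b a := rfl

lemma fe0_eY (i : Fin m) : fe0 m n s(none, vY i) = 2*m+2*n - i.val := by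
  simp [fe0_mk, eh, vY]
lemma fe0_eU (j : Fin n) : fe0 m n s(none, vU j) = 2*m+3*n+1+j.val := by
  simp [fe0_mk, eh, vU]
lemma fe0_eD (j : Fin n) : fe0 m n s(vU j, vV j) = m+2*n-2*j.val := by
  simp [fe0_mk, eh, vU, vV]

lemma fv0_none : fv0 m n none = 2*m+4*n+1 := rfl
lemma fv0_vY (i : Fin m) : fv0 m n (vY i) = i.val + 1 := rfl
lemma fv0_vU (j : Fin n) : fv0 m n (vU j) = 2*m+2*n+1+j.val := rfl
lemma fv0_vV (j : Fin n) : fv0 m n (vV j) = m+2*j.val+1 := rfl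

lemma w0_vY (i : Fin m) : latWeight (spider12 m n) (fv0 m n) (fe0 m n) (vY i) = 2*m+2*n+1 := by
  rw [w_vY, fv0_vY, fe0_eY]
  have := i.isLt; omega

lemma w0_vV (j : Fin n) : latWeight (spider12 m n) (fv0 m n) (fe0 m n) (vV j) = 2*m+2*n+1 := by
  rw [w_vV, fv0_vV, fe0_eD]
  have := j.isLt; omega

lemma w0_vU (j : Fin n) : latWeight (spider12 m n) (fv0 m n) (fe0 m n) (vU j) = 5*m+7*n+2 := by
  rw [w_vU, fv0_vU, fe0_eU, fe0_eD]
  have := j.isLt; omega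

lemma w0_none_ge : 2*m+4*n+1 + (m*(m+2*n+1) + n*(2*m+3*n+1)) ≤
    latWeight (spider12 m n) (fv0 m n) (fe0 m n) none := by
  rw [w_none, fv0_none]
  have h1 : ∀ i : Fin m, m+2*n+1 ≤ fe0 m n s(none, vY i) := by
    intro i; rw [fe0_eY]; have := i.isLt; omega
  have h2 : ∀ j : Fin n, 2*m+3*n+1 ≤ fe0 m n s(none, vU j) := by
    intro j; rw [fe0_eU]; omega
  have s1 : m * (m+2*n+1) ≤ ∑ i : Fin m, fe0 m n s(none, vY i) := by
    calc m * (m+2*n+1) = ∑ _i : Fin m, (m+2*n+1) := by simp [mul_comm]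
    _ ≤ _ := Finset.sum_le_sum (fun i _ => h1 i)
  have s2 : n * (2*m+3*n+1) ≤ ∑ j : Fin n, fe0 m n s(none, vU j) := by
    calc n * (2*m+3*n+1) = ∑ _j : Fin n, (2*m+3*n+1) := by simp [mul_comm]
    _ ≤ _ := Finset.sum_le_sum (fun j _ => h2 j)
  omega

lemma w0_none_gt (hm : 1 ≤ m) (hn : 1 ≤ n) :
    5*m+7*n+2 < latWeight (spider12 m n) (fv0 m n) (fe0 m n) none := by
  have := w0_none_ge m n
  nlinarith [this, hm, hn]

end SpiderUB

namespace SpiderUB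
open SpiderAux
variable (m n : ℕ)

def g0 : Wt m n ⊕ (spider12 m n).edgeSet → ℕ :=
  Sum.elim (fv0 m n) (fun e : (spider12 m n).edgeSet => fe0 m n (e : Sym2 (Wt m n)))

lemma g0_eY (i : Fin m) :
    fe0 m n ((eY i : (spider12 m n).edgeSet) : Sym2 (Wt m n)) = 2*m+2*n - i.val := fe0_eY m n i
lemma g0_eU (j : Fin n) :
    fe0 m n ((eU j : (spider12 m n).edgeSet) : Sym2 (Wt m n)) = 2*m+3*n+1+j.val := fe0_eU m n j
lemma g0_eD (j : Fin n) :
    fe0 m n ((eD j : (spider12 m n).edgeSet) : Sym2 (Wt m n)) = m+2*n-2*j.val := fe0_eD m n j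

lemma g0_inj : Function.Injective (g0 m n) := by
  intro t1 t2 h
  rcases item_cases t1 with rfl | ⟨k, hk, rfl⟩ | ⟨k, hk, rfl⟩ | ⟨k, hk, rfl⟩ | ⟨k, hk, rfl⟩ |
      ⟨k, hk, rfl⟩ | ⟨k, hk, rfl⟩ <;>
    rcases item_cases t2 with rfl | ⟨k', hk', rfl⟩ | ⟨k', hk', rfl⟩ | ⟨k', hk', rfl⟩ |
      ⟨k', hk', rfl⟩ | ⟨k', hk', rfl⟩ | ⟨k', hk', rfl⟩ <;>
    simp only [g0, Sum.elim_inl, Sum.elim_inr, fv0_none, fv0_vY, fv0_vU, fv0_vV,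
      g0_eY, g0_eU, g0_eD, fe0_eY, fe0_eU, fe0_eD, Fin.val_mk] at h ⊢ <;>
    first
      | (exfalso; omega)
      | (simp only [vY, vU, vV, eY, eU, eD, Sum.inl.injEq, Sum.inr.injEq, Option.some.injEq,
          Subtype.mk.injEq, Sym2.eq_iff, Prod.mk.injEq, Fin.mk.injEq, and_true, true_and,
          and_self, or_false, false_or, and_false, false_and] <;> omega)

lemma g0_mem (t : Wt m n ⊕ (spider12 m n).edgeSet) : g0 m n t ∈ Set.Icc 1 (2*m+4*n+1) := by
  rcases item_cases t with rfl | ⟨k, hk, rfl⟩ | ⟨k, hk, rfl⟩ | ⟨k, hk, rfl⟩ | ⟨k, hk, rfl⟩ |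
      ⟨k, hk, rfl⟩ | ⟨k, hk, rfl⟩ <;>
    simp only [g0, Sum.elim_inl, Sum.elim_inr, fv0_none, fv0_vY, fv0_vU, fv0_vV,
      g0_eY, g0_eU, g0_eD, fe0_eY, fe0_eU, fe0_eD, Fin.val_mk, Set.mem_Icc] <;>
    omega

lemma card_items : Fintype.card (Wt m n ⊕ (spider12 m n).edgeSet) = 2*m+4*n+1 := by
  rw [Fintype.card_sum, card_W, card_edgeSet]; ring

lemma total0 : IsTotalLabeling (spider12 m n) (fv0 m n) (fe0 m n) := by
  unfold IsTotalLabeling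
  have hc : Fintype.card (Wt m n) + (spider12 m n).edgeFinset.card = 2*m+4*n+1 := by
    rw [card_W, card_edgeFinset]; ring
  rw [hc]
  exact myBijOn _ _ (g0_inj m n) (g0_mem m n) (card_items m n)

end SpiderUB

namespace SpiderUB
open SpiderAux
variable (m n : ℕ)

lemma locAnti0 (hm : 1 ≤ m) (hn : 1 ≤ n) :
    IsLocalAntimagicTotal (spider12 m n) (fv0 m n) (fe0 m n) := by
  refine ⟨total0 m n, ?_⟩
  have hgt := w0_none_gt m n hm hn
  intro u v huv
  rw [adj_iff] at huv
  rcases huv with ⟨i, rfl, rfl⟩ | ⟨j, rfl, rfl⟩ | ⟨j, rfl, rfl⟩ | ⟨i, rfl, rfl⟩ |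
    ⟨j, rfl, rfl⟩ | ⟨j, rfl, rfl⟩
  · rw [w0_vY]; omega
  · rw [w0_vU]; omega
  · rw [w0_vU, w0_vV]; omega
  · rw [w0_vY]; omega
  · rw [w0_vU]; omega
  · rw [w0_vU, w0_vV]; omega

lemma img0 (hm : 1 ≤ m) (hn : 1 ≤ n) :
    (Finset.univ.image (latWeight (spider12 m n) (fv0 m n) (fe0 m n))).card = 3 := by
  set w := latWeight (spider12 m n) (fv0 m n) (fe0 m n) with hw
  have hgt := w0_none_gt m n hm hn
  rw [← hw] at hgt
  have himg : Finset.univ.image w = {w none, 2*m+2*n+1, 5*m+7*n+2} := by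
    ext t
    simp only [mem_image, mem_univ, true_and, mem_insert, mem_singleton]
    constructor
    · rintro ⟨z, rfl⟩
      rcases z with _ | (i | ⟨j, _ | _⟩)
      · exact Or.inl rfl
      · rw [hw]; rw [show (some (Sum.inl i) : Wt m n) = vY i from rfl, w0_vY]
        exact Or.inr (Or.inl rfl)
      · rw [hw]; rw [show (some (Sum.inr (j, false)) : Wt m n) = vU j from rfl, w0_vU]
        exact Or.inr (Or.inr rfl)
      · rw [hw]; rw [show (some (Sum.inr (j, true)) : Wt m n) = vV j from rfl, w0_vV]
        exact Or.inr (Or.inl rfl)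
    · rintro (rfl | rfl | rfl)
      · exact ⟨none, rfl⟩
      · exact ⟨vY ⟨0, hm⟩, by rw [hw, w0_vY]⟩
      · exact ⟨vU ⟨0, hn⟩, by rw [hw, w0_vU]⟩
  rw [himg]
  rw [Finset.card_insert_of_notMem (by simp only [mem_insert, mem_singleton]; omega),
    Finset.card_insert_of_notMem (by simp only [mem_singleton]; omega), Finset.card_singleton]

end SpiderUB

section Helpers

theorem sigma_le_sum (T : Finset ℕ) (h0 : 0 ∉ T) : T.card * (T.card + 1) ≤ 2 * ∑ i ∈ T, i := by
  induction T using Finset.strongInduction with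
  | _ T ih =>
    rcases T.eq_empty_or_nonempty with rfl | hne
    · simp
    · obtain ⟨M, hM, hMmax⟩ := T.exists_max_image id hne
      have hcard : T.card ≤ M := by
        have hsub : T ⊆ Finset.Icc 1 M := by
          intro z hz
          exact Finset.mem_Icc.mpr ⟨Nat.one_le_iff_ne_zero.mpr (fun h => h0 (h ▸ hz)), hMmax z hz⟩
        calc T.card ≤ (Finset.Icc 1 M).card := Finset.card_le_card hsub
        _ = M := by simp
      have hsub := ih (T.erase M) (Finset.erase_ssubset hM) (fun h => h0 (Finset.mem_of_mem_erase h))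
      have hsum : ∑ i ∈ T, i = M + ∑ i ∈ T.erase M, i := (Finset.add_sum_erase _ id hM).symm
      have hc : (T.erase M).card = T.card - 1 := Finset.card_erase_of_mem hM
      have hc1 : 1 ≤ T.card := Finset.card_pos.mpr hne
      obtain ⟨k, hk⟩ : ∃ k, T.card = k + 1 := ⟨T.card - 1, by omega⟩
      rw [hsum, hk]; rw [hc, hk] at hsub
      simp only [Nat.add_sub_cancel] at hsub
      rw [hk] at hcard
      nlinarith [hsub, hcard]

theorem sigma_le {I : Type*} [DecidableEq I] (S : Finset I) (g : I → ℕ)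
    (hinj : Function.Injective g) (h1 : ∀ i, 1 ≤ g i) :
    S.card * (S.card + 1) ≤ 2 * ∑ i ∈ S, g i := by
  have himg := sigma_le_sum (S.image g) (by
    simp only [Finset.mem_image, not_exists]
    rintro i ⟨-, h⟩
    exact absurd (h ▸ h1 i) (by omega))
  rwa [Finset.card_image_of_injective _ hinj, Finset.sum_image
    (fun a _ b _ h => hinj h)] at himg

theorem exists_small {I : Type*} [DecidableEq I] (S : Finset I) (g : I → ℕ) (N : ℕ)
    (hinj : Function.Injective g) (h1 : ∀ i, 1 ≤ g i) (hub : ∀ i, g i ≤ N)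
    (hS : S.Nonempty) : ∃ i ∈ S, g i + S.card ≤ N + 1 := by
  by_contra hc
  push_neg at hc
  have hsub : S.image g ⊆ Finset.Icc (N + 2 - S.card) N := by
    intro z hz
    obtain ⟨i, hi, rfl⟩ := Finset.mem_image.mp hz
    exact Finset.mem_Icc.mpr ⟨by have := hc i hi; omega, hub i⟩
  have hcard : S.card ≤ (Finset.Icc (N + 2 - S.card) N).card := by
    have := Finset.card_le_card hsub
    rwa [Finset.card_image_of_injective _ hinj] at this
  rw [Nat.card_Icc] at hcard
  have hpos : 1 ≤ S.card := Finset.card_pos.mpr hS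
  have : ∃ i ∈ S, g i ≤ N := ⟨hS.choose, hS.choose_spec, hub _⟩
  obtain ⟨i0, hi0, _⟩ := this
  have := hc i0 hi0
  have := h1 i0
  omega

theorem gauss_Icc (N : ℕ) : (∑ i ∈ Finset.Icc 1 N, i) * 2 = N * (N + 1) := by
  induction N with
  | zero => simp
  | succ k ih => rw [Finset.sum_Icc_succ_top (by omega)]; ring_nf; ring_nf at ih; omega

end Helpers

theorem spider_arith (m n a b : ℕ) (hm : 1 ≤ m) (hn : 1 ≤ n)
    (h : 10 ≤ m + n ∨ ((m = 6 ∧ n = 1) ∨ (m = 5 ∧ n = 2) ∨ (m = 7 ∧ n = 1) ∨ (m = 6 ∧ n = 2) ∨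
      (m = 5 ∧ n = 3) ∨ (m = 4 ∧ n = 4) ∨ (m = 8 ∧ n = 1) ∨ (m = 2 ∧ n = 7) ∨ (m = 3 ∧ n = 6) ∨
      (m = 4 ∧ n = 5) ∨ (m = 5 ∧ n = 4) ∨ (m = 6 ∧ n = 3) ∨ (m = 7 ∧ n = 2) ∨ (m = 4 ∧ n = 1) ∨
      (m = 4 ∧ n = 3) ∨ (m = 5 ∧ n = 1) ∨ (m = 1 ∧ n = 8)))
    (hP1 : (m+n+1)*(m+n+2) ≤ 2*a)
    (hP2 : a + 1 ≤ 2*(2*m+4*n+1))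
    (hI : (m+n+2)*(m+n+3) + 2 + 2*n ≤ 2*b + 2*(2*m+4*n+1) + 2)
    (hJ : 2*m*b + 2*n*a + (m+2*n+1)*(m+2*n+2) + (n+1)*(n+2) ≤
      (2*m+4*n+1)*(2*m+4*n+2) + 2*a) : False := by
  by_cases hs : 13 ≤ m + n
  · have hkey : 8*m + 16*n + 2 < (m+n+1)*(m+n+2) := by nlinarith [hs, hm, hn]
    omega
  · push_neg at hs
    have hm' : m ≤ 11 := by omega
    have hn' : n ≤ 11 := by omega
    interval_cases m <;> interval_cases n <;> omega

namespace SpiderLB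
open SpiderAux

variable {m n : ℕ}

abbrev It (m n : ℕ) := Wt m n ⊕ (spider12 m n).edgeSet

instance instDecEqIt (m n : ℕ) : DecidableEq (It m n) :=
  @instDecidableEqSum _ _ inferInstance inferInstance

theorem extract (hm : 1 ≤ m) (hn : 1 ≤ n) (fv : Wt m n → ℕ) (fe : Sym2 (Wt m n) → ℕ)
    (hA : IsLocalAntimagicTotal (spider12 m n) fv fe)
    (h2 : (Finset.univ.image (latWeight (spider12 m n) fv fe)).card = 2) :
    ∃ a b : ℕ,
      (m+n+1)*(m+n+2) ≤ 2*a ∧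
      a + 1 ≤ 2*(2*m+4*n+1) ∧
      (m+n+2)*(m+n+3) + 2 + 2*n ≤ 2*b + 2*(2*m+4*n+1) + 2 ∧
      2*m*b + 2*n*a + (m+2*n+1)*(m+2*n+2) + (n+1)*(n+2) ≤
        (2*m+4*n+1)*(2*m+4*n+2) + 2*a := by
  set N := 2*m+4*n+1 with hN
  set w := latWeight (spider12 m n) fv fe with hw
  -- two values
  obtain ⟨x, y, hxy, hxyeq⟩ := Finset.card_eq_two.mp h2
  have hmemw : ∀ z : Wt m n, w z ∈ ({x, y} : Finset ℕ) := by
    intro z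
    rw [← hxyeq]
    exact Finset.mem_image_of_mem w (Finset.mem_univ z)
  obtain ⟨b, hba, hwz⟩ : ∃ b : ℕ, b ≠ w none ∧ ∀ z : Wt m n, w z = w none ∨ w z = b := by
    rcases Finset.mem_insert.mp (hmemw none) with hax | hay
    · refine ⟨y, fun h => hxy (hax.symm.trans h.symm), fun z => ?_⟩
      rcases Finset.mem_insert.mp (hmemw z) with h | h
      · exact Or.inl (h.trans hax.symm)
      · exact Or.inr (Finset.mem_singleton.mp h)
    · have hay' := Finset.mem_singleton.mp hay
      refine ⟨x, fun h => hxy (h.trans hay'), fun z => ?_⟩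
      rcases Finset.mem_insert.mp (hmemw z) with h | h
      · exact Or.inr h
      · exact Or.inl ((Finset.mem_singleton.mp h).trans hay'.symm)
  have hYb : ∀ i : Fin m, w (vY i) = b :=
    fun i => (hwz _).resolve_left (fun h => hA.2 (adj_none_vY i) h.symm)
  have hUb : ∀ j : Fin n, w (vU j) = b :=
    fun j => (hwz _).resolve_left (fun h => hA.2 (adj_none_vU j) h.symm)
  have hVa : ∀ j : Fin n, w (vV j) = w none := by
    intro j
    refine (hwz _).resolve_right (fun h => hA.2 (adj_vU_vV j) ?_)
    show w (vU j) = w (vV j)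
    rw [h, hUb j]
  -- the label function
  set g : It m n → ℕ := Sum.elim fv (fun e : (spider12 m n).edgeSet => fe (e : Sym2 (Wt m n)))
    with hg
  have hbij : Set.BijOn g Set.univ (Set.Icc 1 N) := by
    have hc : Fintype.card (Wt m n) + (spider12 m n).edgeFinset.card = N := by
      rw [card_W, card_edgeFinset, hN]; ring
    have := hA.1
    rw [IsTotalLabeling, hc] at this
    exact this
  have ginj : Function.Injective g := Set.injOn_univ.mp hbij.injOn
  have g1 : ∀ t, 1 ≤ g t := fun t => (hbij.mapsTo (Set.mem_univ t)).1
  have gN : ∀ t, g t ≤ N := fun t => (hbij.mapsTo (Set.mem_univ t)).2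
  -- weight equations
  have eqY : ∀ i : Fin m, g (Sum.inl (vY i)) + g (Sum.inr (eY i)) = b := by
    intro i
    have := hYb i
    rw [hw, w_vY] at this
    exact this
  have eqU : ∀ j : Fin n, g (Sum.inl (vU j)) + (g (Sum.inr (eU j)) + g (Sum.inr (eD j))) = b := by
    intro j
    have := hUb j
    rw [hw, w_vU] at this
    exact this
  have eqV : ∀ j : Fin n, g (Sum.inl (vV j)) + g (Sum.inr (eD j)) = w none := by
    intro j
    have := hVa j
    rw [hw, w_vV] at this
    exact this
  have eqX : g (Sum.inl none) +
      ((∑ i : Fin m, g (Sum.inr (eY i))) + ∑ j : Fin n, g (Sum.inr (eU j))) = w none := by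
    conv_rhs => rw [hw, w_none]
    rfl
  -- P2
  have hP2 : w none + 1 ≤ 2*N := by
    have h1 := gN (Sum.inl (vV ⟨0, hn⟩))
    have h2 := gN (Sum.inr (eD ⟨0, hn⟩))
    have hne : g (Sum.inl (vV ⟨0, hn⟩)) ≠ g (Sum.inr (eD ⟨0, hn⟩)) := by
      intro h
      exact absurd (ginj h) (by simp)
    have h3 := eqV ⟨0, hn⟩
    omega
  -- the X set
  have hiYinj : Function.Injective (fun i : Fin m => (Sum.inr (eY i) : It m n)) :=
    fun i i' h => eY_inj (Sum.inr_injective h)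
  have hiUinj : Function.Injective (fun j : Fin n => (Sum.inr (eU j) : It m n)) :=
    fun j j' h => eU_inj (Sum.inr_injective h)
  have hiVinj : Function.Injective (fun j : Fin n => (Sum.inl (vV j) : It m n)) := by
    intro a b h
    simpa [vV] using h
  have hilUinj : Function.Injective (fun j : Fin n => (Sum.inl (vU j) : It m n)) := by
    intro a b h
    simpa [vU] using h
  set SX : Finset (It m n) := insert (Sum.inl none)
    ((Finset.univ.image fun i : Fin m => (Sum.inr (eY i) : It m n)) ∪
     (Finset.univ.image fun j : Fin n => (Sum.inr (eU j) : It m n))) with hSX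
  have hdisjYU : Disjoint (Finset.univ.image fun i : Fin m => (Sum.inr (eY i) : It m n))
      (Finset.univ.image fun j : Fin n => (Sum.inr (eU j) : It m n)) := by
    simp only [Finset.disjoint_left, Finset.mem_image, Finset.mem_univ, true_and,
      forall_exists_index]
    rintro t i rfl ⟨j, hj⟩
    exact eY_ne_eU i j (Sum.inr_injective hj.symm)
  have hXnotin : (Sum.inl none : It m n) ∉
      ((Finset.univ.image fun i : Fin m => (Sum.inr (eY i) : It m n)) ∪
       (Finset.univ.image fun j : Fin n => (Sum.inr (eU j) : It m n))) := by
    simp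
  have cardSX : SX.card = m+n+1 := by
    rw [hSX, Finset.card_insert_of_notMem hXnotin, Finset.card_union_of_disjoint hdisjYU,
      Finset.card_image_of_injective _ hiYinj, Finset.card_image_of_injective _ hiUinj]
    simp
  have sumSX : ∑ t ∈ SX, g t = w none := by
    rw [hSX, Finset.sum_insert hXnotin, Finset.sum_union hdisjYU,
      Finset.sum_image (fun a _ b _ h => hiYinj h), Finset.sum_image (fun a _ b _ h => hiUinj h)]
    exact eqX
  have hP1 : (m+n+1)*(m+n+2) ≤ 2 * w none := by
    have hs := sigma_le SX g ginj g1
    rw [cardSX, sumSX] at hs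
    exact hs
  -- condition I
  have hSVne : (Finset.univ.image fun j : Fin n => (Sum.inl (vV j) : It m n)).Nonempty :=
    ⟨_, Finset.mem_image_of_mem _ (Finset.mem_univ ⟨0, hn⟩)⟩
  obtain ⟨t, ht, hts⟩ := exists_small
    (Finset.univ.image fun j : Fin n => (Sum.inl (vV j) : It m n)) g N ginj g1 gN hSVne
  rw [Finset.card_image_of_injective _ hiVinj, Finset.card_univ, Fintype.card_fin] at hts
  obtain ⟨j1, -, rfl⟩ := Finset.mem_image.mp ht
  have hUnotin : (Sum.inl (vU j1) : It m n) ∉ SX := by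
    rw [hSX]
    simp [vU]
  have key2 : (m+n+2)*(m+n+3) ≤ 2*(g (Sum.inl (vU j1)) + w none) := by
    have hs := sigma_le (insert (Sum.inl (vU j1)) SX) g ginj g1
    rw [Finset.card_insert_of_notMem hUnotin, Finset.sum_insert hUnotin, cardSX, sumSX] at hs
    have harr : (m+n+1+1)*(m+n+1+1+1) = (m+n+2)*(m+n+3) := by ring
    rw [harr] at hs
    exact hs
  have key1 : b + g (Sum.inl (vV j1)) =
      g (Sum.inl (vU j1)) + g (Sum.inr (eU j1)) + w none := by
    have h1 := eqU j1
    have h2 := eqV j1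
    omega
  have hI : (m+n+2)*(m+n+3) + 2 + 2*n ≤ 2*b + 2*N + 2 := by
    have k3 := g1 (Sum.inr (eU j1))
    omega
  -- condition J
  have hTsum : 2 * (∑ t : It m n, g t) = N*(N+1) := by
    have himgF : Finset.univ.image g = Finset.Icc 1 N := by
      apply Finset.coe_injective
      rw [Finset.coe_image, Finset.coe_univ, Finset.coe_Icc]
      exact hbij.image_eq
    have hsi : ∑ x ∈ Finset.univ.image g, x = ∑ t : It m n, g t :=
      Finset.sum_image (fun a _ b _ h => ginj h)
    rw [← hsi, himgF, mul_comm]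
    exact gauss_Icc N
  have hpart : ∑ t : It m n, g t =
      g (Sum.inl none) + ((∑ i : Fin m, g (Sum.inl (vY i))) +
        ((∑ j : Fin n, g (Sum.inl (vU j))) + (∑ j : Fin n, g (Sum.inl (vV j))))) +
      ((∑ i : Fin m, g (Sum.inr (eY i))) + (∑ j : Fin n, g (Sum.inr (eU j))) +
        (∑ j : Fin n, g (Sum.inr (eD j)))) := by
    rw [Fintype.sum_sum_type]
    congr 1
    · rw [Fintype.sum_option, Fintype.sum_sum_type, Fintype.sum_prod_type]
      congr 1
      congr 1
      rw [← Finset.sum_add_distrib]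
      refine Finset.sum_congr rfl (fun j _ => ?_)
      rw [Fintype.sum_bool]
      exact Nat.add_comm _ _
    · exact sum_edges (fun e => g (Sum.inr e))
  have mbeq : (∑ i : Fin m, g (Sum.inl (vY i))) + (∑ i : Fin m, g (Sum.inr (eY i))) = m * b := by
    rw [← Finset.sum_add_distrib, Finset.sum_congr rfl (fun i _ => eqY i), Finset.sum_const,
      Finset.card_univ, Fintype.card_fin, smul_eq_mul]
  have nbeq : (∑ j : Fin n, g (Sum.inl (vU j))) + ((∑ j : Fin n, g (Sum.inr (eU j))) +
      (∑ j : Fin n, g (Sum.inr (eD j)))) = n * b := by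
    rw [← Finset.sum_add_distrib, ← Finset.sum_add_distrib,
      Finset.sum_congr rfl (fun j _ => eqU j), Finset.sum_const,
      Finset.card_univ, Fintype.card_fin, smul_eq_mul]
  have naeq : (∑ j : Fin n, g (Sum.inl (vV j))) + (∑ j : Fin n, g (Sum.inr (eD j))) =
      n * w none := by
    rw [← Finset.sum_add_distrib, Finset.sum_congr rfl (fun j _ => eqV j), Finset.sum_const,
      Finset.card_univ, Fintype.card_fin, smul_eq_mul]
  have hUXnotin : Disjoint (Finset.univ.image fun j : Fin n => (Sum.inl (vU j) : It m n)) SX := by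
    simp only [Finset.disjoint_left, Finset.mem_image, Finset.mem_univ, true_and,
      forall_exists_index]
    rintro t j rfl
    rw [hSX]
    simp [vU]
  have sigU : (m+2*n+1)*(m+2*n+2) ≤
      2*((∑ j : Fin n, g (Sum.inl (vU j))) + w none) := by
    have hs := sigma_le ((Finset.univ.image fun j : Fin n => (Sum.inl (vU j) : It m n)) ∪ SX)
      g ginj g1
    rw [Finset.card_union_of_disjoint hUXnotin, Finset.sum_union hUXnotin, cardSX, sumSX,
      Finset.card_image_of_injective _ hilUinj, Finset.card_univ, Fintype.card_fin,
      Finset.sum_image (fun a _ b _ h => hilUinj h)] at hs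
    have harr : (n+(m+n+1))*(n+(m+n+1)+1) = (m+2*n+1)*(m+2*n+2) := by ring
    rw [harr] at hs
    exact hs
  have hXQnotin : (Sum.inl none : It m n) ∉
      (Finset.univ.image fun j : Fin n => (Sum.inr (eU j) : It m n)) := by simp
  have sigQ : (n+1)*(n+2) ≤
      2*(g (Sum.inl none) + ∑ j : Fin n, g (Sum.inr (eU j))) := by
    have hs := sigma_le (insert (Sum.inl none)
      (Finset.univ.image fun j : Fin n => (Sum.inr (eU j) : It m n))) g ginj g1
    rw [Finset.card_insert_of_notMem hXQnotin, Finset.sum_insert hXQnotin,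
      Finset.card_image_of_injective _ hiUinj, Finset.card_univ, Fintype.card_fin,
      Finset.sum_image (fun a _ b _ h => hiUinj h)] at hs
    have harr : (n+1)*(n+1+1) = (n+1)*(n+2) := by ring
    rw [harr] at hs
    exact hs
  have hJ : 2*(m*b) + 2*(n*(w none)) + (m+2*n+1)*(m+2*n+2) + (n+1)*(n+2) ≤
      N*(N+1) + 2*(w none) := by
    linarith [hTsum, hpart, mbeq, naeq, sigU, sigQ, eqX]
  refine ⟨w none, b, hP1, hP2, hI, ?_⟩
  have e1 : 2*(m*b) = 2*m*b := by ring
  have e2 : 2*(n*(w none)) = 2*n*(w none) := by ring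
  have e3 : N*(N+1) = (2*m+4*n+1)*(2*m+4*n+2) := by rw [hN]
  linarith [hJ, e1, e2, e3, show N*(N+1) = N*(2*m+4*n+2) by rw [hN]]


end SpiderLB

theorem spider_arith' (m n a b : ℕ) (hm : 1 ≤ m) (hn : 1 ≤ n)
    (h : 10 ≤ m + n ∨ (m, n) ∈
      ([(6, 1), (5, 2), (7, 1), (6, 2), (5, 3), (4, 4), (8, 1), (2, 7), (3, 6), (4, 5),
        (5, 4), (6, 3), (7, 2), (4, 1), (4, 3), (5, 1), (1, 8)] : List (ℕ × ℕ)))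
    (hP1 : (m+n+1)*(m+n+2) ≤ 2*a)
    (hP2 : a + 1 ≤ 2*(2*m+4*n+1))
    (hI : (m+n+2)*(m+n+3) + 2 + 2*n ≤ 2*b + 2*(2*m+4*n+1) + 2)
    (hJ : 2*m*b + 2*n*a + (m+2*n+1)*(m+2*n+2) + (n+1)*(n+2) ≤
      (2*m+4*n+1)*(2*m+4*n+2) + 2*a) : False := by
  simp only [List.mem_cons, List.not_mem_nil, or_false, Prod.mk.injEq] at h
  by_cases hs : 13 ≤ m + n
  · have hkey : 8*m + 16*n + 2 < (m+n+1)*(m+n+2) := by nlinarith [hs, hm, hn]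
    omega
  · push_neg at hs
    have hm' : m ≤ 11 := by omega
    have hn' : n ≤ 11 := by omega
    interval_cases m <;> interval_cases n <;> omega

theorem chiLat_spider12_eq_three' (m n : ℕ) (hm : 1 ≤ m) (hn : 1 ≤ n)
    (h : 10 ≤ m + n ∨ (m, n) ∈
      ([(6, 1), (5, 2), (7, 1), (6, 2), (5, 3), (4, 4), (8, 1), (2, 7), (3, 6), (4, 5),
        (5, 4), (6, 3), (7, 2), (4, 1), (4, 3), (5, 1), (1, 8)] : List (ℕ × ℕ))) :
    chiLat (spider12 m n) = 3 := by
  have h3 : 3 ∈ {c | ∃ fv fe, IsLocalAntimagicTotal (spider12 m n) fv fe ∧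
      (Finset.univ.image (latWeight (spider12 m n) fv fe)).card = c} :=
    ⟨SpiderUB.fv0 m n, SpiderUB.fe0 m n, SpiderUB.locAnti0 m n hm hn, SpiderUB.img0 m n hm hn⟩
  refine le_antisymm (Nat.sInf_le h3) (le_csInf ⟨3, h3⟩ ?_)
  rintro c ⟨fv, fe, hA, rfl⟩
  by_contra hlt
  push_neg at hlt
  set w := latWeight (spider12 m n) fv fe with hw
  have h1 : 0 < (Finset.univ.image w).card :=
    Finset.card_pos.mpr ⟨w none, Finset.mem_image_of_mem w (Finset.mem_univ none)⟩
  have hne2 : (Finset.univ.image w).card ≠ 2 := by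
    intro h2
    obtain ⟨a, b, hP1, hP2, hI, hJ⟩ := SpiderLB.extract hm hn fv fe hA h2
    exact spider_arith' m n a b hm hn h hP1 hP2 hI hJ
  have hc1 : (Finset.univ.image w).card = 1 := by omega
  obtain ⟨t, hteq⟩ := Finset.card_eq_one.mp hc1
  have hx : w none = t := by
    have := Finset.mem_image_of_mem w (Finset.mem_univ (none : SpiderAux.Wt m n))
    rw [hteq] at this
    exact Finset.mem_singleton.mp this
  have hy : w (SpiderAux.vY ⟨0, hm⟩) = t := by
    have := Finset.mem_image_of_mem w (Finset.mem_univ (SpiderAux.vY ⟨0, hm⟩ : SpiderAux.Wt m n))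
    rw [hteq] at this
    exact Finset.mem_singleton.mp this
  exact hA.2 (SpiderAux.adj_none_vY ⟨0, hm⟩) (hx.trans hy.symm)

/-- If `m + n ≥ 10`, or `(m,n)` is one of the listed exceptional pairs, then the spider
`Sp(1^[m], 2^[n])` has local antimagic total chromatic number `3`. -/
theorem chiLat_spider12_eq_three (m n : ℕ) (hm : 1 ≤ m) (hn : 1 ≤ n)
    (h : 10 ≤ m + n ∨ (m, n) ∈
      ([(6, 1), (5, 2), (7, 1), (6, 2), (5, 3), (4, 4), (8, 1), (2, 7), (3, 6), (4, 5),
        (5, 4), (6, 3), (7, 2), (4, 1), (4, 3), (5, 1), (1, 8)] : List (ℕ × ℕ))) :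
    chiLat (spider12 m n) = 3 :=
  chiLat_spider12_eq_three' m n hm hn h
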